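/- Let F(t) = aN x(t) + aN y(t+τ) + (a/2) v(t+τ), where (x, y, v, z) solves the delayed HIV system with nonnegative components. Then F'(t) ≤ λaN - ϱ F(t) where ϱ = min(d, a/2, μ); consequently, by Gronwall's inequality, F(t) ≤ max(F(0), λaN/ϱ) for all t ≥ 0, so x, y, v are bounded. -/

import Mathlib

theorem F_bounded (lam d beta a p N mu c h tau : ℝ)
    (hlam : 0 < lam) (hd : 0 < d) (hbeta : 0 < beta) (ha : 0 < a)
    (hp : 0 < p) (hN : 0 < N) (hmu : 0 < mu) (hc : 0 < c) (hh : 0 < h)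
    (htau : 0 ≤ tau)
    (x y v z : ℝ → ℝ)
    (hnonneg : ∀ t, -tau ≤ t → 0 ≤ x t ∧ 0 ≤ y t ∧ 0 ≤ v t ∧ 0 ≤ z t)
    (hode : ∀ t, (0:ℝ) ≤ t →
      HasDerivAt x (lam - d * x t - beta * x t * v t) t ∧
      HasDerivAt y (beta * x (t - tau) * v (t - tau) - a * y t - p * y t * z t) t ∧
      HasDerivAt v (a * N * y t - mu * v t) t ∧
      HasDerivAt z (c * x t * y t * z t - h * z t) t) :
    let F : ℝ → ℝ := fun t => a * N * x t + a * N * y (t + tau) + (a / 2) * v (t + tau)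
    let rho := min d (min (a / 2) mu)
    (∀ t, (0:ℝ) ≤ t → deriv F t ≤ lam * a * N - rho * F t) ∧
    (∀ t, (0:ℝ) ≤ t → F t ≤ max (F 0) (lam * a * N / rho)) := by
  intro F rho
  have hrho : 0 < rho := lt_min hd (lt_min (by linarith) hmu)
  have hrd : rho ≤ d := min_le_left _ _
  have hra : rho ≤ a / 2 := le_trans (min_le_right _ _) (min_le_left _ _)
  have hrm : rho ≤ mu := le_trans (min_le_right _ _) (min_le_right _ _)
  -- derivative of F
  have hF : ∀ t, 0 ≤ t → HasDerivAt F
      (a*N*(lam - d * x t - beta * x t * v t)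
        + a*N*(beta * x t * v t - a * y (t+tau) - p * y (t+tau) * z (t+tau))
        + (a/2)*(a*N*y (t+tau) - mu * v (t+tau))) t := by
    intro t ht
    have htt : (0:ℝ) ≤ t + tau := by linarith
    obtain ⟨hx, -, -, -⟩ := hode t ht
    obtain ⟨-, hy, hv, -⟩ := hode (t+tau) htt
    rw [add_sub_cancel_right] at hy
    have hyc : HasDerivAt (fun s => y (s+tau))
        (beta * x t * v t - a * y (t+tau) - p * y (t+tau) * z (t+tau)) t := by
      simpa [Function.comp_def] using hy.comp t ((hasDerivAt_id t).add_const tau)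
    have hvc : HasDerivAt (fun s => v (s+tau))
        (a*N*y (t+tau) - mu * v (t+tau)) t := by
      simpa [Function.comp_def] using hv.comp t ((hasDerivAt_id t).add_const tau)
    exact ((hx.const_mul (a*N)).add (hyc.const_mul (a*N))).add (hvc.const_mul (a/2))
  -- key pointwise inequality on the derivative value
  have key : ∀ t, 0 ≤ t →
      a*N*(lam - d * x t - beta * x t * v t)
        + a*N*(beta * x t * v t - a * y (t+tau) - p * y (t+tau) * z (t+tau))
        + (a/2)*(a*N*y (t+tau) - mu * v (t+tau)) ≤ lam * a * N - rho * F t := by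
    intro t ht
    obtain ⟨hx0, -, -, -⟩ := hnonneg t (by linarith)
    obtain ⟨-, hy0, hv0, hz0⟩ := hnonneg (t+tau) (by linarith)
    have haN : 0 ≤ a * N := (mul_pos ha hN).le
    show _ ≤ lam * a * N - rho * (a * N * x t + a * N * y (t+tau) + (a/2) * v (t+tau))
    nlinarith [mul_nonneg (mul_nonneg (sub_nonneg.2 hrd) haN) hx0,
      mul_nonneg (mul_nonneg (sub_nonneg.2 hra) haN) hy0,
      mul_nonneg (mul_nonneg (sub_nonneg.2 hrm) (by linarith : (0:ℝ) ≤ a/2)) hv0,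
      mul_nonneg (mul_nonneg (mul_nonneg haN hp.le) hy0) hz0]
  constructor
  · intro t ht
    rw [(hF t ht).deriv]
    exact key t ht
  · intro t ht
    set K := lam * a * N / rho with hK
    have hKr : rho * K = lam * a * N := by rw [hK]; field_simp
    set G : ℝ → ℝ := fun s => (F s - K) * Real.exp (rho * s) with hG
    have hGd : ∀ s, 0 ≤ s → HasDerivAt G
        ((a*N*(lam - d * x s - beta * x s * v s)
          + a*N*(beta * x s * v s - a * y (s+tau) - p * y (s+tau) * z (s+tau))
          + (a/2)*(a*N*y (s+tau) - mu * v (s+tau))) * Real.exp (rho * s)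
          + (F s - K) * (rho * Real.exp (rho * s))) s := by
      intro s hs
      have he : HasDerivAt (fun u => Real.exp (rho * u)) (rho * Real.exp (rho * s)) s := by
        simpa [mul_comm] using ((hasDerivAt_id s).const_mul rho).exp
      exact ((hF s hs).sub_const K).mul he
    have hGanti : AntitoneOn G (Set.Ici 0) := by
      apply antitoneOn_of_deriv_nonpos (convex_Ici 0)
      · intro s hs
        exact ((hGd s hs).continuousAt).continuousWithinAt
      · intro s hs
        rw [interior_Ici] at hs
        exact ((hGd s (le_of_lt hs)).differentiableAt).differentiableWithinAt
      · intro s hs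
        rw [interior_Ici] at hs
        rw [(hGd s (le_of_lt hs)).deriv]
        have h1 := key s (le_of_lt hs)
        have he : (0:ℝ) < Real.exp (rho * s) := Real.exp_pos _
        nlinarith [he.le]
    have hGt : G t ≤ G 0 := hGanti Set.self_mem_Ici (Set.mem_Ici.2 ht) ht
    have hG0 : G 0 = F 0 - K := by simp [hG]
    have hexp : 1 ≤ Real.exp (rho * t) := Real.one_le_exp (by positivity)
    rcases le_or_gt (F t) K with h | h
    · exact le_max_of_le_right h
    · have : F t - K ≤ (F t - K) * Real.exp (rho * t) :=
        le_mul_of_one_le_right (by linarith) hexp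
      have : F t - K ≤ F 0 - K := by
        rw [hG0] at hGt
        exact le_trans this hGt
      exact le_max_of_le_left (by linarith)
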